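/- Define a scrambled 1-simplex of size m in K^n to be any set of at most m collinear points, and recursively define a scrambled k-simplex of size m to be a set E contained in the union of m distinct parallel affine hyperplanes (of dimension k-1 within the ambient affine span) H_1,...,H_m such that E ∩ H_i is a scrambled (k-1)-simplex of size i. Then, for K of characteristic 0, any subset E of a scrambled n-simplex of size m in K^n imposes independent conditions on polynomials of degree at most m-1: the space of polynomials in n variables of degree ≤ m-1 vanishing on E has dimension binomial(m+n-1, n) - #E. -/
import Mathlib


open MvPolynomial
open scoped Classical

/-- The space of polynomials in `n` variables of total degree at most `D`
vanishing at every point of `E ⊆ K^n`. -/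
noncomputable def vanishSpace (K : Type*) [Field K] (n D : ℕ)
    (E : Set (Fin n → K)) : Submodule K (MvPolynomial (Fin n) K) :=
  MvPolynomial.restrictTotalDegree (Fin n) K D ⊓
    ⨅ x ∈ E, LinearMap.ker (MvPolynomial.aeval (R := K) x).toLinearMap

/-- A scrambled `k`-simplex of size `m` in `K^n` (affine version): a scrambled `1`-simplex
of size `m` is a set of at most `m` collinear points; a scrambled `(k+1)`-simplex of size
`m` is a set contained in the union of `m` distinct parallel `k`-dimensional affine
subspaces `p_i + W` such that the intersection with the `i`-th one is a scrambled
`k`-simplex of size `i`. -/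
def IsScrambledSimplex {K : Type*} [Field K] {n : ℕ} :
    ℕ → ℕ → Finset (Fin n → K) → Prop
  | 0, _, E => E = ∅
  | 1, m, E => E.card ≤ m ∧ ∃ p v : Fin n → K, ∀ x ∈ E, ∃ t : K, x = p + t • v
  | (k + 2), m, E => ∃ W : Submodule K (Fin n → K), Module.finrank K ↥W = k + 1 ∧
      ∃ p : Fin m → (Fin n → K),
        (∀ i j : Fin m, i ≠ j → p i - p j ∉ W) ∧
        (∀ x ∈ E, ∃ i : Fin m, x - p i ∈ W) ∧
        ∀ i : Fin m,
          IsScrambledSimplex (k + 1) ((i : ℕ) + 1) (E.filter (fun x => x - p i ∈ W))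


private lemma finite_sum_le (n N : ℕ) :
    {d : Fin n →₀ ℕ | (d.sum fun _ e => e) ≤ N}.Finite := by
  have h1 : {f : Fin n →₀ ℕ | ∀ a, f a ≤ N}.Finite :=
    ((Set.Finite.pi' fun _ ↦ Set.finite_le_nat _).preimage DFunLike.coe_injective.injOn)
  exact h1.subset fun d hd a ↦ (eq_or_ne (d a) 0).elim (fun h ↦ h.trans_le N.zero_le) fun h ↦
    (Finset.single_le_sum (fun _ _ ↦ Nat.zero_le _) (Finsupp.mem_support_iff.mpr h)).trans hd

private lemma card_sum_eq (n k : ℕ) :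
    Nat.card {d : Fin n →₀ ℕ // (d.sum fun _ e => e) = k} = (n + k - 1).choose k := by
  have e : {d : Fin n →₀ ℕ // (d.sum fun _ e => e) = k} ≃ Sym (Fin n) k :=
    { toFun := fun d => ⟨Finsupp.toMultiset d.1, by
        rw [Finsupp.card_toMultiset]; exact d.2⟩
      invFun := fun s => ⟨Multiset.toFinsupp s.1, by
        have h := Finsupp.card_toMultiset (Multiset.toFinsupp s.1)
        rw [Multiset.toFinsupp_toMultiset] at h
        exact h.symm.trans s.2⟩
      left_inv := fun d => Subtype.ext (Finsupp.toMultiset_toFinsupp d.1)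
      right_inv := fun s => Subtype.ext (Multiset.toFinsupp_toMultiset s.1) }
  rw [Nat.card_congr e, Nat.card_eq_fintype_card, Sym.card_sym_eq_choose, Fintype.card_fin]

private lemma card_sum_le (n D : ℕ) :
    Nat.card {d : Fin n →₀ ℕ // (d.sum fun _ e => e) ≤ D} = (D + n).choose n := by
  induction D with
  | zero =>
    have e : {d : Fin n →₀ ℕ // (d.sum fun _ e => e) ≤ 0} ≃
        {d : Fin n →₀ ℕ // (d.sum fun _ e => e) = 0} :=
      Equiv.subtypeEquivRight fun d => by omega
    rw [Nat.card_congr e, card_sum_eq]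
    simp
  | succ D ih =>
    have hU : {d : Fin n →₀ ℕ | (d.sum fun _ e => e) ≤ D + 1}
        = {d : Fin n →₀ ℕ | (d.sum fun _ e => e) ≤ D} ∪
          {d : Fin n →₀ ℕ | (d.sum fun _ e => e) = D + 1} := by
      ext d; simp only [Set.mem_union, Set.mem_setOf_eq]; omega
    have hd : Disjoint {d : Fin n →₀ ℕ | (d.sum fun _ e => e) ≤ D}
        {d : Fin n →₀ ℕ | (d.sum fun _ e => e) = D + 1} := by
      rw [Set.disjoint_left]; intro d h1 h2
      simp only [Set.mem_setOf_eq] at h1 h2; omega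
    have hfin2 : {d : Fin n →₀ ℕ | (d.sum fun _ e => e) = D + 1}.Finite :=
      (finite_sum_le n (D + 1)).subset fun d hd => le_of_eq hd
    have hcalc : Nat.card {d : Fin n →₀ ℕ // (d.sum fun _ e => e) ≤ D + 1}
        = (D + n).choose n + (n + (D + 1) - 1).choose (D + 1) := by
      rw [← ih, ← card_sum_eq n (D + 1)]
      show Nat.card ↥{d : Fin n →₀ ℕ | (d.sum fun _ e => e) ≤ D + 1}
        = Nat.card ↥{d : Fin n →₀ ℕ | (d.sum fun _ e => e) ≤ D}
          + Nat.card ↥{d : Fin n →₀ ℕ | (d.sum fun _ e => e) = D + 1}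
      rw [Nat.card_coe_set_eq, Nat.card_coe_set_eq, Nat.card_coe_set_eq, hU]
      exact Set.ncard_union_eq hd (finite_sum_le n D) hfin2
    rw [hcalc]
    have h1 := Nat.choose_symm (show n ≤ D + n by omega)
    rw [show D + n - n = D from by omega] at h1
    have h2 := Nat.choose_symm (show n ≤ D + 1 + n by omega)
    rw [show D + 1 + n - n = D + 1 from by omega] at h2
    rw [show n + (D + 1) - 1 = D + n from by omega, ← h1, ← h2]
    rw [show D + 1 + n = (D + n) + 1 from by omega, Nat.choose_succ_succ]

private lemma finrank_rtd (K : Type*) [Field K] (n D : ℕ) :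
    Module.finrank K (restrictTotalDegree (Fin n) K D) = (D + n).choose n := by
  unfold restrictTotalDegree
  rw [Module.finrank_eq_nat_card_basis
    (MvPolynomial.basisRestrictSupport K {d : Fin n →₀ ℕ | (d.sum fun _ e => e) ≤ D})]
  exact card_sum_le n D

private lemma exists_dual_sep {K : Type*} [Field K] {V : Type*} [AddCommGroup V] [Module K V]
    (W : Submodule K V) (v : V) (hv : v ∉ W) :
    ∃ φ : V →ₗ[K] K, (∀ w ∈ W, φ w = 0) ∧ φ v ≠ 0 := by
  have h0 : W.mkQ v ≠ 0 := by
    simpa [Submodule.mkQ_apply, Submodule.Quotient.mk_eq_zero] using hv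
  obtain ⟨g, hg⟩ : ∃ g : Module.Dual K (V ⧸ W), g (W.mkQ v) ≠ 0 := by
    by_contra h
    push_neg at h
    exact h0 ((Module.forall_dual_apply_eq_zero_iff K _).mp h)
  refine ⟨g ∘ₗ W.mkQ, fun w hw => ?_, hg⟩
  simp [Submodule.mkQ_apply, (Submodule.Quotient.mk_eq_zero W).mpr hw]

private noncomputable def linPoly {K : Type*} [Field K] {n : ℕ}
    (φ : (Fin n → K) →ₗ[K] K) : MvPolynomial (Fin n) K :=
  ∑ i, C (φ fun j => if i = j then 1 else 0) * X i

private lemma aeval_linPoly {K : Type*} [Field K] {n : ℕ}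
    (φ : (Fin n → K) →ₗ[K] K) (x : Fin n → K) : aeval x (linPoly φ) = φ x := by
  rw [linPoly, map_sum, LinearMap.pi_apply_eq_sum_univ φ x]
  refine Finset.sum_congr rfl fun i _ => ?_
  simp [smul_eq_mul, mul_comm]

private lemma totalDegree_linPoly_le {K : Type*} [Field K] {n : ℕ}
    (φ : (Fin n → K) →ₗ[K] K) : (linPoly φ).totalDegree ≤ 1 := by
  refine (totalDegree_finset_sum _ _).trans ?_
  refine Finset.sup_le fun i _ => ?_
  refine (totalDegree_mul _ _).trans ?_
  simp [totalDegree_C, totalDegree_X]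

private lemma scrambled_indep {K : Type*} [Field K] {n : ℕ} (k : ℕ) :
    ∀ (m : ℕ) (T E : Finset (Fin n → K)), IsScrambledSimplex k m T → E ⊆ T →
    ∀ c : (Fin n → K) → K,
      (∀ f : MvPolynomial (Fin n) K, f.totalDegree ≤ m - 1 →
        ∑ y ∈ E, c y * aeval y f = 0) →
      ∀ x ∈ E, c x = 0 := by
  induction k using Nat.strong_induction_on with
  | _ k IH =>
  match k with
  | 0 =>
    intro m T E hT hET c hc x hxE
    rw [IsScrambledSimplex] at hT
    subst hT
    exact absurd (hET hxE) (by simp)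
  | 1 =>
    intro m T E hT hET c hc x hxE
    rw [IsScrambledSimplex] at hT
    obtain ⟨hcard, p, v, hpv⟩ := hT
    have hEcard : E.card ≤ m := le_trans (Finset.card_le_card hET) hcard
    have hE1 : 1 ≤ E.card := Finset.card_pos.mpr ⟨x, hxE⟩
    by_cases hv : v = 0
    · have hTp : ∀ y ∈ T, y = p := by
        intro y hy
        obtain ⟨t, ht⟩ := hpv y hy
        simp [ht, hv]
      have hxp : x = p := hTp x (hET hxE)
      have hEx : E = {x} := by
        apply Finset.eq_singleton_iff_unique_mem.mpr
        exact ⟨hxE, fun y hy => (hTp y (hET hy)).trans hxp.symm⟩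
      have h0 := hc 1 (by simp)
      rw [hEx, Finset.sum_singleton] at h0
      simpa using h0
    · obtain ⟨c0, hc0⟩ : ∃ c0, v c0 ≠ 0 := Function.ne_iff.mp hv
      set f : MvPolynomial (Fin n) K := ∏ y ∈ E.erase x, (X c0 - C (y c0)) with hf
      have hdeg : f.totalDegree ≤ m - 1 := by
        refine (totalDegree_finset_prod _ _).trans ?_
        have hb : ∀ y ∈ E.erase x, ((X c0 - C (y c0) : MvPolynomial (Fin n) K)).totalDegree ≤ 1 :=
          fun y _ => (totalDegree_sub_C_le _ _).trans (le_of_eq (totalDegree_X _))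
        calc ∑ y ∈ E.erase x, ((X c0 - C (y c0) : MvPolynomial (Fin n) K)).totalDegree
            ≤ ∑ _y ∈ E.erase x, 1 := Finset.sum_le_sum hb
          _ = (E.erase x).card := by simp
          _ ≤ m - 1 := by rw [Finset.card_erase_of_mem hxE]; omega
      have hval : ∀ y : Fin n → K, aeval y f = ∏ z ∈ E.erase x, (y c0 - z c0) := by
        intro y
        rw [hf, map_prod]
        exact Finset.prod_congr rfl fun z _ => by simp
      have hzero : ∀ y ∈ E, y ≠ x → aeval y f = 0 := by
        intro y hy hne
        rw [hval]
        exact Finset.prod_eq_zero (Finset.mem_erase.mpr ⟨hne, hy⟩) (by ring)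
      have h0 := hc f hdeg
      rw [Finset.sum_eq_single_of_mem x hxE
        (fun y hy hne => by rw [hzero y hy hne, mul_zero])] at h0
      have hfx : aeval x f ≠ 0 := by
        rw [hval]
        refine Finset.prod_ne_zero_iff.mpr fun z hz => ?_
        obtain ⟨hzx, hzE⟩ := Finset.mem_erase.mp hz
        obtain ⟨t, ht⟩ := hpv x (hET hxE)
        obtain ⟨s, hs⟩ := hpv z (hET hzE)
        have hts : t ≠ s := by
          intro h; exact hzx (by rw [hs, ht, h])
        have : x c0 - z c0 = (t - s) * v c0 := by
          rw [ht, hs]; simp [Pi.add_apply]; ring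
        rw [this]
        exact mul_ne_zero (sub_ne_zero.mpr hts) hc0
      exact (mul_eq_zero.mp h0).resolve_right hfx
  | (k + 2) =>
    intro m T E hT hET c hc x hxE
    rw [IsScrambledSimplex] at hT
    obtain ⟨W, _hW, p, hpp, hcover, hrec⟩ := hT
    have key : ∀ N : ℕ, ∀ i : Fin m, (i : ℕ) < N → ∀ x ∈ E, x - p i ∈ W → c x = 0 := by
      intro N
      induction N with
      | zero => exact fun i h => absurd h (by omega)
      | succ N IHN =>
        intro i hiN x hxE hxW
        -- choose separating functionals
        have hφex : ∀ j : Fin m, ∃ φ : (Fin n → K) →ₗ[K] K,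
            (∀ w ∈ W, φ w = 0) ∧ (j ≠ i → φ (p i - p j) ≠ 0) := by
          intro j
          by_cases hj : j = i
          · exact ⟨0, fun w _ => rfl, fun h => absurd hj h⟩
          · obtain ⟨φ, h1, h2⟩ := exists_dual_sep W (p i - p j) (hpp i j (Ne.symm hj))
            exact ⟨φ, h1, fun _ => h2⟩
        choose φ hφW hφne using hφex
        -- the inner claim
        have inner : ∀ g : MvPolynomial (Fin n) K, g.totalDegree ≤ (i : ℕ) →
            ∑ y ∈ E.filter (fun y => y - p i ∈ W), c y * aeval y g = 0 := by
          intro g hg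
          set P : MvPolynomial (Fin n) K :=
            ∏ j ∈ Finset.Ioi i, (linPoly (φ j) - C (φ j (p j))) with hP
          have hPdeg : P.totalDegree ≤ (Finset.Ioi i).card := by
            refine (totalDegree_finset_prod _ _).trans ?_
            have hb := Finset.sum_le_card_nsmul (Finset.Ioi i)
              (fun j => (linPoly (φ j) - C (φ j (p j))).totalDegree) 1
              (fun j _ => (totalDegree_sub_C_le _ _).trans (totalDegree_linPoly_le _))
            simpa using hb
          have hfdeg : (g * P).totalDegree ≤ m - 1 := by
            refine (totalDegree_mul _ _).trans ?_
            have h1 : (Finset.Ioi i).card = m - 1 - (i : ℕ) := Fin.card_Ioi i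
            have h2 : (i : ℕ) < m := i.isLt
            omega
          have hPval : ∀ y : Fin n → K,
              aeval y P = ∏ j ∈ Finset.Ioi i, (φ j y - φ j (p j)) := by
            intro y
            rw [hP, map_prod]
            exact Finset.prod_congr rfl fun j _ => by
              rw [map_sub, aeval_linPoly]; simp
          have h0 := hc (g * P) hfdeg
          rw [← Finset.sum_filter_add_sum_filter_not E (fun y => y - p i ∈ W)
            (fun y => c y * aeval y (g * P))] at h0
          have h2 : ∑ y ∈ E.filter (fun y => ¬ (y - p i ∈ W)), c y * aeval y (g * P) = 0 := by
            refine Finset.sum_eq_zero fun y hy => ?_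
            obtain ⟨hyE, hyW⟩ := Finset.mem_filter.mp hy
            obtain ⟨j, hj⟩ := hcover y (hET hyE)
            have hji : j ≠ i := fun h => hyW (h ▸ hj)
            rcases hji.lt_or_gt with hlt | hgt
            · have : c y = 0 := by
                refine IHN j ?_ y hyE hj
                have := Fin.lt_iff_val_lt_val.mp hlt
                omega
              rw [this, zero_mul]
            · have : aeval y P = 0 := by
                rw [hPval]
                refine Finset.prod_eq_zero (Finset.mem_Ioi.mpr hgt) ?_
                rw [← map_sub]
                exact hφW j _ hj
              rw [map_mul, this, mul_zero, mul_zero]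
          have h1 : ∑ y ∈ E.filter (fun y => y - p i ∈ W), c y * aeval y (g * P)
              = (∏ j ∈ Finset.Ioi i, φ j (p i - p j)) *
                ∑ y ∈ E.filter (fun y => y - p i ∈ W), c y * aeval y g := by
            rw [Finset.mul_sum]
            refine Finset.sum_congr rfl fun y hy => ?_
            have hyW : y - p i ∈ W := (Finset.mem_filter.mp hy).2
            have hPy : aeval y P = ∏ j ∈ Finset.Ioi i, φ j (p i - p j) := by
              rw [hPval]
              refine Finset.prod_congr rfl fun j _ => ?_
              have : φ j y - φ j (p j) = φ j (y - p i) + φ j (p i - p j) := by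
                rw [← map_add, ← map_sub]
                congr 1
                abel
              rw [this, hφW j _ hyW, zero_add]
            rw [map_mul, hPy]
            ring
          have hCst : (∏ j ∈ Finset.Ioi i, φ j (p i - p j)) ≠ 0 :=
            Finset.prod_ne_zero_iff.mpr fun j hj =>
              hφne j (ne_of_gt (Finset.mem_Ioi.mp hj))
          rw [h1, h2, add_zero] at h0
          exact (mul_eq_zero.mp h0).resolve_left hCst
        have := IH (k + 1) (by omega) ((i : ℕ) + 1)
          (T.filter (fun y => y - p i ∈ W)) (E.filter (fun y => y - p i ∈ W))
          (hrec i) (Finset.filter_subset_filter _ hET) c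
          (by simpa using inner)
        exact this x (Finset.mem_filter.mpr ⟨hxE, hxW⟩)
    obtain ⟨i, hi⟩ := hcover x (hET hxE)
    exact key m i i.isLt x hxE hi

set_option maxHeartbeats 1000000 in
set_option synthInstance.maxHeartbeats 400000 in
/-- Proposition ("skewsimplex", affine version): any subset `E` of a scrambled `n`-simplex
of size `m` in `K^n` imposes independent conditions on polynomials of degree at most
`m-1`: the vanishing space has dimension `C(m+n-1, n) - #E`. -/
theorem scrambled_simplex_nonspecial {K : Type*} [Field K] [CharZero K]
    (n m : ℕ) (hn : 1 ≤ n) (hm : 1 ≤ m)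
    (E T : Finset (Fin n → K)) (hT : IsScrambledSimplex n m T) (hET : E ⊆ T) :
    Module.finrank K ↥(vanishSpace K n (m - 1) (E : Set (Fin n → K))) =
      (m + n - 1).choose n - E.card := by
  have hkey : vanishSpace K n (m - 1) (E : Set (Fin n → K)) =
      restrictTotalDegree (Fin n) K (m - 1) ⊓
        (⨅ x ∈ (E : Set (Fin n → K)), LinearMap.ker (aeval (R := K) x).toLinearMap) := rfl
  let V := restrictTotalDegree (Fin n) K (m - 1)
  let P : Submodule K (MvPolynomial (Fin n) K) :=
    ⨅ x ∈ (E : Set (Fin n → K)), LinearMap.ker (aeval (R := K) x).toLinearMap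
  let Φ : V →ₗ[K] (↥E → K) :=
    LinearMap.pi fun x : ↥E => (aeval (R := K) (x : Fin n → K)).toLinearMap ∘ₗ V.subtype
  have hker : LinearMap.ker Φ = Submodule.comap V.subtype P := by
    ext f
    constructor
    · intro hf
      refine Submodule.mem_comap.mpr (Submodule.mem_iInf _ |>.mpr fun x => ?_)
      refine Submodule.mem_iInf _ |>.mpr fun hx => ?_
      have := congrFun (LinearMap.mem_ker.mp hf) ⟨x, hx⟩
      simpa [Φ] using this
    · intro hf
      refine LinearMap.mem_ker.mpr (funext fun x => ?_)
      have h1 := Submodule.mem_iInf _ |>.mp (Submodule.mem_comap.mp hf) (x : Fin n → K)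
      have h2 := Submodule.mem_iInf _ |>.mp h1 x.2
      simpa [Φ] using h2
  have hsurj : LinearMap.range Φ = ⊤ := by
    by_contra hne
    obtain ⟨u, hu⟩ : ∃ u : ↥E → K, u ∉ LinearMap.range Φ := by
      by_contra h
      push_neg at h
      exact hne (Submodule.eq_top_iff'.mpr h)
    obtain ⟨lam, hlam0, hlamu⟩ := exists_dual_sep (LinearMap.range Φ) u hu
    have hrep : ∀ v : ↥E → K, lam v = ∑ x : ↥E, v x * lam (fun z => if x = z then 1 else 0) := by
      intro v
      conv_lhs => rw [LinearMap.pi_apply_eq_sum_univ lam v]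
      simp [smul_eq_mul]
    have hc0 : ∀ y ∈ E, (fun y => if h : y ∈ E then
        lam (fun z => if (⟨y, h⟩ : ↥E) = z then 1 else 0) else 0) y = 0 := by
      refine scrambled_indep n m T E hT hET _ ?_
      intro f hf
      have hfV : f ∈ V := (mem_restrictTotalDegree _ _ f).mpr hf
      have h3 : lam (Φ ⟨f, hfV⟩) = 0 := hlam0 _ ⟨⟨f, hfV⟩, rfl⟩
      rw [hrep (Φ ⟨f, hfV⟩)] at h3
      rw [← Finset.sum_coe_sort E]
      refine Eq.trans ?_ h3
      refine Finset.sum_congr rfl fun x _ => ?_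
      rw [dif_pos x.2]
      have h5 : Φ ⟨f, hfV⟩ x = aeval (x : Fin n → K) f := rfl
      have h6 : (⟨(x : Fin n → K), x.2⟩ : ↥E) = x := rfl
      rw [h5, h6, mul_comm]
    have hlamz : ∀ v, lam v = 0 := by
      intro v
      rw [hrep v]
      refine Finset.sum_eq_zero fun x _ => ?_
      have hx : (if h : (x : Fin n → K) ∈ E then
          lam (fun z => if (⟨(x : Fin n → K), h⟩ : ↥E) = z then 1 else 0) else 0) = 0 :=
        hc0 (x : Fin n → K) x.2
      rw [dif_pos x.2] at hx
      have he : (⟨(x : Fin n → K), x.2⟩ : ↥E) = x := rfl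
      rw [he] at hx
      rw [hx, mul_zero]
    exact hlamu (hlamz u)
  have hrn := LinearMap.finrank_range_add_finrank_ker Φ
  rw [hsurj, finrank_top] at hrn
  have hcard : Module.finrank K (↥E → K) = E.card := by
    rw [Module.finrank_pi]
    exact Fintype.card_coe E
  have heq : Module.finrank K ↥(vanishSpace K n (m - 1) (E : Set (Fin n → K)))
      = Module.finrank K ↥(LinearMap.ker Φ) := by
    rw [hker]
    have h1 : Submodule.comap V.subtype P = Submodule.comap V.subtype (V ⊓ P) := by
      rw [Submodule.comap_inf, Submodule.comap_subtype_self, top_inf_eq]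
    rw [hkey, h1]
    exact (Submodule.comapSubtypeEquivOfLe (inf_le_left : V ⊓ P ≤ V)).finrank_eq.symm
  have hV : Module.finrank K V = (m + n - 1).choose n := by
    rw [show Module.finrank K V = Module.finrank K (restrictTotalDegree (Fin n) K (m-1)) from rfl,
      finrank_rtd]
    congr 1
    omega
  rw [heq]
  have hfin : E.card + Module.finrank K ↥(LinearMap.ker Φ) = (m + n - 1).choose n := by
    rw [← hV, ← hrn, hcard]
  omega
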